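/- Cone construction: let H be a hyperplane of PG(v−1, F_q), P a point not in H, and B a set of points of H such that |B| ≡ 0 (mod q^(r+1)) and B is q^r-divisible within H. Let K be the union over Q ∈ B of the lines PQ, with the point P removed. Then K is q^(r+1)-divisible: the number of points of K outside any hyperplane of PG(v−1, F_q) is divisible by q^(r+1). -/

import Mathlib

open Submodule Module Set

section helpers

variable {K V : Type*} [Field K] [AddCommGroup V] [Module K V] [FiniteDimensional K V]

private lemma exists_span_of_finrank_one' (S : Submodule K V) (h : finrank K S = 1) :
    ∃ w : V, w ≠ 0 ∧ S = span K {w} := by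
  have hbot : S ≠ ⊥ := by
    intro hb
    rw [hb] at h
    simp at h
  obtain ⟨w, hwS, hw0⟩ := Submodule.exists_mem_ne_zero_of_ne_bot hbot
  refine ⟨w, hw0, ?_⟩
  have hle : span K {w} ≤ S := (span_singleton_le_iff_mem w S).2 hwS
  exact (Submodule.eq_of_le_of_finrank_eq hle
    (by rw [finrank_span_singleton hw0, h])).symm

private lemma line_param_inj {p q0 : V} (hp : p ≠ 0) (hq0 : q0 ∉ span K {p}) :
    Function.Injective (fun t : K => span K ({q0 + t • p} : Set V)) := by
  intro s t h
  simp only at h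
  have hmem : q0 + s • p ∈ span K ({q0 + t • p} : Set V) := by
    rw [← h]; exact mem_span_singleton_self _
  obtain ⟨c, hc⟩ := mem_span_singleton.1 hmem
  have hc' : (c - 1) • q0 = (s - c * t) • p := by
    linear_combination (norm := module) hc
  by_cases hc1 : c = 1
  · rw [hc1, sub_self, zero_smul, one_mul] at hc'
    rcases smul_eq_zero.1 hc'.symm with h1 | h1
    · exact sub_eq_zero.1 h1
    · exact absurd h1 hp
  · exfalso
    apply hq0
    have h4 : q0 = (c - 1)⁻¹ • ((s - c * t) • p) := by
      rw [← hc', inv_smul_smul₀ (sub_ne_zero.2 hc1)]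
    rw [h4]
    exact Submodule.smul_mem _ _ (Submodule.smul_mem _ _ (mem_span_singleton_self p))

private lemma line_points_eq (H'' : Submodule K V) {p q0 : V} (hp : p ≠ 0)
    (hq0 : q0 ∉ span K {p}) :
    {R : Submodule K V | finrank K R = 1 ∧ R ≠ span K {p} ∧
        R ≤ span K {p} ⊔ span K {q0} ∧ ¬ R ≤ H''}
      = (fun t : K => span K ({q0 + t • p} : Set V)) '' {t : K | q0 + t • p ∉ H''} := by
  have hsup : span K ({p} : Set V) ⊔ span K {q0} = span K {p, q0} :=
    (span_insert p {q0}).symm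
  ext R
  simp only [mem_setOf_eq, mem_image]
  constructor
  · rintro ⟨h1, h2, h3, h4⟩
    obtain ⟨w, hw0, hweq⟩ := exists_span_of_finrank_one' R h1
    have hwR : w ∈ R := by rw [hweq]; exact mem_span_singleton_self w
    have hwL : w ∈ span K {p, q0} := by rw [← hsup]; exact h3 hwR
    obtain ⟨a, b, hab⟩ := mem_span_pair.1 hwL
    have hb : b ≠ 0 := by
      intro hb0
      apply h2
      rw [hb0, zero_smul, add_zero] at hab
      have ha : a ≠ 0 := fun h => hw0 (by rw [← hab, h, zero_smul])
      rw [hweq, ← hab]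
      exact span_singleton_smul_eq (IsUnit.mk0 a ha) p
    have hkey : b⁻¹ • w = q0 + (b⁻¹ * a) • p := by
      rw [← hab, smul_add, smul_smul, smul_smul, inv_mul_cancel₀ hb, one_smul]
      exact add_comm _ _
    have hspan : span K ({q0 + (b⁻¹ * a) • p} : Set V) = R := by
      rw [← hkey, hweq]
      exact span_singleton_smul_eq (IsUnit.mk0 _ (inv_ne_zero hb)) w
    refine ⟨b⁻¹ * a, ?_, hspan⟩
    intro hmem
    exact h4 (by rw [← hspan]; exact (span_singleton_le_iff_mem _ _).2 hmem)
  · rintro ⟨t, ht, rfl⟩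
    have hv0 : q0 + t • p ≠ 0 := by
      intro h0
      apply hq0
      have h5 : q0 = (-t) • p := by
        rw [neg_smul]
        exact eq_neg_of_add_eq_zero_left h0
      rw [h5]
      exact Submodule.smul_mem _ _ (mem_span_singleton_self p)
    refine ⟨finrank_span_singleton hv0, ?_, ?_, ?_⟩
    · intro heq
      apply hq0
      have h5 : q0 + t • p ∈ span K ({p} : Set V) := by
        rw [← heq]; exact mem_span_singleton_self _
      have h6 : q0 = (q0 + t • p) - t • p := by abel
      rw [h6]
      exact Submodule.sub_mem _ h5 (Submodule.smul_mem _ _ (mem_span_singleton_self p))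
    · rw [hsup]
      exact (span_singleton_le_iff_mem _ _).2
        (mem_span_pair.2 ⟨t, 1, by rw [one_smul]; exact add_comm _ _⟩)
    · intro hle
      exact ht (hle (mem_span_singleton_self _))

end helpers

/-- Cone construction: if B is a q^r-divisible set of points of a hyperplane H with
|B| ≡ 0 (mod q^(r+1)), P a point outside H, and K the union of the lines PQ (Q ∈ B)
with P removed, then K is q^(r+1)-divisible. -/
theorem cone_construction_divisible {F : Type*} [Field F] [Fintype F] {v r : ℕ}
    (hv : 2 ≤ v)
    (H : Submodule F (Fin v → F)) (hH : Module.finrank F H = v - 1)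
    (P : Submodule F (Fin v → F)) (hP : Module.finrank F P = 1) (hPH : ¬ P ≤ H)
    (B : Set (Submodule F (Fin v → F)))
    (hB : ∀ Q ∈ B, Module.finrank F Q = 1 ∧ Q ≤ H)
    (hBcard : Fintype.card F ^ (r + 1) ∣ B.ncard)
    (hBdiv : ∀ H' : Submodule F (Fin v → F), H' ≤ H → Module.finrank F H' = v - 2 →
      Fintype.card F ^ r ∣ {Q ∈ B | ¬ Q ≤ H'}.ncard) :
    ∀ H'' : Submodule F (Fin v → F), Module.finrank F H'' = v - 1 →
      Fintype.card F ^ (r + 1) ∣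
        {R : Submodule F (Fin v → F) |
          (Module.finrank F R = 1 ∧ R ≠ P ∧ ∃ Q ∈ B, R ≤ P ⊔ Q) ∧ ¬ R ≤ H''}.ncard := by
  classical
  intro H'' hH''
  have hVfin : finrank F (Fin v → F) = v := Module.finrank_fin_fun F
  have hfinSub : Finite (Submodule F (Fin v → F)) :=
    Finite.of_injective (fun S => (S : Set (Fin v → F))) SetLike.coe_injective
  obtain ⟨p, hp0, hPeq⟩ := exists_span_of_finrank_one' P hP
  have hpP : p ∈ P := by rw [hPeq]; exact mem_span_singleton_self p
  have hpH : p ∉ H := fun hmem =>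
    hPH (by rw [hPeq]; exact (span_singleton_le_iff_mem _ _).2 hmem)
  set T : Submodule F (Fin v → F) → Set (Submodule F (Fin v → F)) :=
    fun Q => {R | finrank F R = 1 ∧ R ≠ P ∧ R ≤ P ⊔ Q ∧ ¬ R ≤ H''} with hTdef
  have hBfin : B.Finite := Set.toFinite B
  set Bfin : Finset (Submodule F (Fin v → F)) := hBfin.toFinset with hBfindef
  set TF : Submodule F (Fin v → F) → Finset (Submodule F (Fin v → F)) :=
    fun Q => (Set.toFinite (T Q)).toFinset with hTFdef
  -- per-Q spanning vectors
  have hQvec : ∀ Q ∈ B, ∃ w : Fin v → F,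
      w ≠ 0 ∧ w ∈ H ∧ w ∉ span F {p} ∧ Q = span F {w} := by
    intro Q hQ
    obtain ⟨hQ1, hQH⟩ := hB Q hQ
    obtain ⟨w, hw0, hWeq⟩ := exists_span_of_finrank_one' Q hQ1
    refine ⟨w, hw0, hQH (by rw [hWeq]; exact mem_span_singleton_self w), ?_, hWeq⟩
    intro hwp
    apply hPH
    have hQP : Q ≤ P := by
      rw [hWeq, hPeq]; exact span_le.2 (by simpa using hwp)
    have hQPeq : Q = P := Submodule.eq_of_le_of_finrank_eq hQP (by rw [hQ1, hP])
    rw [← hQPeq]; exact hQH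
  -- disjointness of the T Q for distinct Q ∈ B
  have hdisj : ∀ Q ∈ B, ∀ Q' ∈ B, Q ≠ Q' → ∀ R, R ∈ T Q → R ∈ T Q' → False := by
    intro Q hQ Q' hQ' hne R hR hR'
    obtain ⟨h1, h2, h3, h4⟩ := hR
    obtain ⟨-, -, h3', -⟩ := hR'
    obtain ⟨u, hu0, huH, hup, hQeq⟩ := hQvec Q hQ
    obtain ⟨u', hu0', huH', hup', hQeq'⟩ := hQvec Q' hQ'
    obtain ⟨w, hw0, hweq⟩ := exists_span_of_finrank_one' R h1
    have hwR : w ∈ R := by rw [hweq]; exact mem_span_singleton_self w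
    have hw1 : w ∈ span F {p, u} := by
      have := h3 hwR
      rw [hPeq, hQeq, ← span_insert] at this
      exact this
    have hw2 : w ∈ span F {p, u'} := by
      have := h3' hwR
      rw [hPeq, hQeq', ← span_insert] at this
      exact this
    obtain ⟨a, b, hab⟩ := mem_span_pair.1 hw1
    obtain ⟨a', b', hab'⟩ := mem_span_pair.1 hw2
    have key : ∀ (x : Fin v → F) (c d : F), c • p + d • x = w → d ≠ 0 := by
      intro x c d habx hd0
      apply h2
      rw [hd0, zero_smul, add_zero] at habx
      have hc : c ≠ 0 := fun h => hw0 (by rw [← habx, h, zero_smul])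
      rw [hweq, ← habx, hPeq]
      exact span_singleton_smul_eq (IsUnit.mk0 c hc) p
    have hbne := key u a b hab
    have hbne' := key u' a' b' hab'
    have hdiff : b' • u' - b • u = (a - a') • p := by
      linear_combination (norm := module) hab' - hab
    have haa : a = a' := by
      by_contra hne2
      apply hpH
      have hpval : p = (a - a')⁻¹ • (b' • u' - b • u) := by
        rw [hdiff, inv_smul_smul₀ (sub_ne_zero.2 hne2)]
      rw [hpval]
      exact H.smul_mem _ (H.sub_mem (H.smul_mem _ huH') (H.smul_mem _ huH))
    have hval : b' • u' = b • u := by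
      have h9 := hdiff
      rw [haa, sub_self, zero_smul] at h9
      exact sub_eq_zero.1 h9
    apply hne
    rw [hQeq, hQeq']
    have h7 : u' = (b'⁻¹ * b) • u := by
      rw [mul_smul, ← hval, inv_smul_smul₀ hbne']
    rw [h7]
    exact (span_singleton_smul_eq
      (IsUnit.mk0 _ (mul_ne_zero (inv_ne_zero hbne') hbne)) u).symm
  -- cardinality of each T Q
  have hTcard : ∀ Q ∈ B, (T Q).ncard =
      (if P ≤ H'' then (if Q ≤ H'' then 0 else Fintype.card F)
        else Fintype.card F - 1) := by
    intro Q hQ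
    obtain ⟨u, hu0, huH, hup, hQeq⟩ := hQvec Q hQ
    have himg : T Q =
        (fun t : F => span F ({u + t • p} : Set (Fin v → F))) ''
          {t : F | u + t • p ∉ H''} := by
      have := line_points_eq (K := F) H'' hp0 hup
      simp only [hTdef]
      rw [hPeq, hQeq]
      exact this
    by_cases hPH'' : P ≤ H''
    · have hpH'' : p ∈ H'' := hPH'' hpP
      by_cases hQH'' : Q ≤ H''
      · rw [if_pos hPH'', if_pos hQH'']
        have huH'' : u ∈ H'' := hQH'' (by rw [hQeq]; exact mem_span_singleton_self u)
        have hempty : {t : F | u + t • p ∉ H''} = ∅ := by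
          ext t
          simp only [mem_setOf_eq, mem_empty_iff_false, iff_false, not_not]
          exact H''.add_mem huH'' (H''.smul_mem _ hpH'')
        rw [himg, Set.ncard_image_of_injective _ (line_param_inj hp0 hup), hempty,
          Set.ncard_empty]
      · rw [if_pos hPH'', if_neg hQH'']
        have huH'' : u ∉ H'' := fun h =>
          hQH'' (by rw [hQeq]; exact (span_singleton_le_iff_mem _ _).2 h)
        have huniv : {t : F | u + t • p ∉ H''} = Set.univ := by
          ext t
          simp only [mem_setOf_eq, mem_univ, iff_true]
          intro hmem
          apply huH''
          have : u = (u + t • p) - t • p := by abel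
          rw [this]
          exact H''.sub_mem hmem (H''.smul_mem _ hpH'')
        rw [himg, Set.ncard_image_of_injective _ (line_param_inj hp0 hup), huniv,
          Set.ncard_univ, Nat.card_eq_fintype_card]
    · rw [if_neg hPH'']
      have hpH'' : p ∉ H'' := fun h =>
        hPH'' (by rw [hPeq]; exact (span_singleton_le_iff_mem _ _).2 h)
      -- the line P ⊔ Q meets H'' nontrivially
      have hPQbot : P ⊓ Q = ⊥ := by
        rw [eq_bot_iff]
        intro x hx
        rcases eq_or_ne x 0 with rfl | hx0
        · simp
        · exfalso
          apply hPH
          have hxP : x ∈ P := (Submodule.mem_inf.1 hx).1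
          have hxQ : x ∈ Q := (Submodule.mem_inf.1 hx).2
          have h8 : span F {x} = P := Submodule.eq_of_le_of_finrank_eq
            ((span_singleton_le_iff_mem _ _).2 hxP)
            (by rw [finrank_span_singleton hx0, hP])
          have h9 : span F {x} = Q := Submodule.eq_of_le_of_finrank_eq
            ((span_singleton_le_iff_mem _ _).2 hxQ)
            (by rw [finrank_span_singleton hx0, (hB Q hQ).1])
          rw [← h8, h9]
          exact (hB Q hQ).2
      have hdim2 : finrank F (P ⊔ Q : Submodule F (Fin v → F)) = 2 := by
        have h10 := Submodule.finrank_sup_add_finrank_inf_eq P Q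
        rw [hPQbot, hP, (hB Q hQ).1] at h10
        simp only [finrank_bot, add_zero] at h10
        omega
      have hint : (P ⊔ Q) ⊓ H'' ≠ ⊥ := by
        intro hbot
        have h11 := Submodule.finrank_sup_add_finrank_inf_eq (P ⊔ Q) H''
        rw [hbot, hdim2, hH''] at h11
        simp only [finrank_bot, add_zero] at h11
        have h12 : finrank F ((P ⊔ Q) ⊔ H'' : Submodule F (Fin v → F)) ≤ v := by
          have := Submodule.finrank_le ((P ⊔ Q) ⊔ H'' : Submodule F (Fin v → F))
          rwa [hVfin] at this
        omega
      obtain ⟨w, hwmem, hw0⟩ := Submodule.exists_mem_ne_zero_of_ne_bot hint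
      have hwL : w ∈ span F {p, u} := by
        have h13 : w ∈ P ⊔ Q := (Submodule.mem_inf.1 hwmem).1
        rwa [hPeq, hQeq, ← span_insert] at h13
      have hwH'' : w ∈ H'' := (Submodule.mem_inf.1 hwmem).2
      obtain ⟨a, b, hab⟩ := mem_span_pair.1 hwL
      have hb : b ≠ 0 := by
        intro hb0
        apply hpH''
        rw [hb0, zero_smul, add_zero] at hab
        have ha : a ≠ 0 := fun h => hw0 (by rw [← hab, h, zero_smul])
        have : p = a⁻¹ • w := by rw [← hab, inv_smul_smul₀ ha]
        rw [this]
        exact H''.smul_mem _ hwH''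
      have ht0mem : u + (b⁻¹ * a) • p ∈ H'' := by
        have hkey : b⁻¹ • w = u + (b⁻¹ * a) • p := by
          rw [← hab, smul_add, smul_smul, smul_smul, inv_mul_cancel₀ hb, one_smul]
          exact add_comm _ _
        rw [← hkey]
        exact H''.smul_mem _ hwH''
      have hset : {t : F | u + t • p ∉ H''} = {b⁻¹ * a}ᶜ := by
        ext t
        simp only [mem_setOf_eq, mem_compl_iff, mem_singleton_iff]
        constructor
        · intro h ht
          rw [ht] at h
          exact h ht0mem
        · intro hne hmem
          apply hpH''
          have hsub : (t - b⁻¹ * a) • p ∈ H'' := by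
            have h14 : (u + t • p) - (u + (b⁻¹ * a) • p) = (t - b⁻¹ * a) • p := by
              rw [sub_smul]; abel
            rw [← h14]
            exact H''.sub_mem hmem ht0mem
          have h15 : p = (t - b⁻¹ * a)⁻¹ • ((t - b⁻¹ * a) • p) :=
            (inv_smul_smul₀ (sub_ne_zero.2 hne) p).symm
          rw [h15]
          exact H''.smul_mem _ hsub
      rw [himg, Set.ncard_image_of_injective _ (line_param_inj hp0 hup), hset,
        compl_eq_univ_diff, Set.ncard_diff (subset_univ _), Set.ncard_univ,
        Nat.card_eq_fintype_card, Set.ncard_singleton]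
  -- rewrite the big set as a finite disjoint union
  have hSeq : {R : Submodule F (Fin v → F) |
      (finrank F R = 1 ∧ R ≠ P ∧ ∃ Q ∈ B, R ≤ P ⊔ Q) ∧ ¬ R ≤ H''}
      = ↑(Bfin.biUnion TF) := by
    ext R
    simp only [Finset.coe_biUnion, mem_iUnion, Finset.mem_coe, hBfindef,
      hBfin.mem_toFinset, hTFdef, Set.Finite.mem_toFinset, mem_setOf_eq, hTdef]
    constructor
    · rintro ⟨⟨h1, h2, Q, hQ, h3⟩, h4⟩
      exact ⟨Q, hQ, h1, h2, h3, h4⟩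
    · rintro ⟨Q, hQ, h1, h2, h3, h4⟩
      exact ⟨⟨h1, h2, Q, hQ, h3⟩, h4⟩
  rw [hSeq, Set.ncard_coe_finset]
  rw [Finset.card_biUnion (by
    intro x hx y hy hxy
    rw [Function.onFun, Finset.disjoint_left]
    intro R hR hR'
    exact hdisj x (hBfin.mem_toFinset.1 hx) y (hBfin.mem_toFinset.1 hy) hxy R
      ((Set.toFinite _).mem_toFinset.1 hR) ((Set.toFinite _).mem_toFinset.1 hR'))]
  have hTFcard : ∀ Q, (TF Q).card = (T Q).ncard := fun Q =>
    (Set.ncard_eq_toFinset_card _ (Set.toFinite _)).symm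
  by_cases hPH'' : P ≤ H''
  · have hsum : ∑ Q ∈ Bfin, (TF Q).card =
        ∑ Q ∈ Bfin, (if Q ≤ H'' then 0 else Fintype.card F) := by
      refine Finset.sum_congr rfl fun Q hQ => ?_
      rw [hTFcard, hTcard Q (hBfin.mem_toFinset.1 hQ), if_pos hPH'']
    rw [hsum, Finset.sum_ite, Finset.sum_const_zero, Finset.sum_const, zero_add,
      smul_eq_mul]
    -- relate the filter to the hyperplane H ⊓ H'' of H
    have hHne : H'' ≠ H := fun h => hPH (h ▸ hPH'')
    have hdimH' : finrank F (H ⊓ H'' : Submodule F (Fin v → F)) = v - 2 := by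
      have h20 := Submodule.finrank_sup_add_finrank_inf_eq H H''
      rw [hH, hH''] at h20
      have h21 : finrank F (H ⊔ H'' : Submodule F (Fin v → F)) ≤ v := by
        have := Submodule.finrank_le (H ⊔ H'' : Submodule F (Fin v → F))
        rwa [hVfin] at this
      have h22 : ¬ finrank F (H ⊔ H'' : Submodule F (Fin v → F)) ≤ v - 1 := by
        intro hle
        have hmono : (v - 1 : ℕ) ≤ finrank F (H ⊔ H'' : Submodule F (Fin v → F)) := by
          rw [← hH'']
          exact Submodule.finrank_mono le_sup_right
        have heqr : finrank F (H ⊔ H'' : Submodule F (Fin v → F)) = v - 1 :=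
          le_antisymm hle hmono
        have heq1 : H'' = H ⊔ H'' := Submodule.eq_of_le_of_finrank_eq le_sup_right
          (by rw [hH'', heqr])
        have hle2 : H ≤ H'' := heq1 ▸ le_sup_left
        exact hHne (Submodule.eq_of_le_of_finrank_eq hle2 (by rw [hH, hH''])).symm
      omega
    have hfilter : (Bfin.filter fun Q => ¬ Q ≤ H'').card
        = {Q ∈ B | ¬ Q ≤ H ⊓ H''}.ncard := by
      have hseteq : {Q ∈ B | ¬ Q ≤ H ⊓ H''}
          = ↑(Bfin.filter fun Q => ¬ Q ≤ H'') := by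
        ext Q
        simp only [Finset.coe_filter, mem_setOf_eq, hBfindef, hBfin.mem_toFinset]
        constructor
        · rintro ⟨hQ, hQn⟩
          exact ⟨hQ, fun hle => hQn (le_inf (hB Q hQ).2 hle)⟩
        · rintro ⟨hQ, hQn⟩
          exact ⟨hQ, fun hle => hQn (hle.trans inf_le_right)⟩
      rw [hseteq, Set.ncard_coe_finset]
    rw [hfilter, pow_succ]
    exact mul_dvd_mul (hBdiv (H ⊓ H'') inf_le_left hdimH') dvd_rfl
  · have hsum : ∑ Q ∈ Bfin, (TF Q).card = Bfin.card * (Fintype.card F - 1) := by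
      rw [Finset.sum_congr rfl (fun Q hQ => by
        rw [hTFcard, hTcard Q (hBfin.mem_toFinset.1 hQ), if_neg hPH''])]
      rw [Finset.sum_const, smul_eq_mul]
    rw [hsum]
    have hcardB : Bfin.card = B.ncard := (Set.ncard_eq_toFinset_card _ hBfin).symm
    rw [hcardB]
    exact hBcard.mul_right _
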